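/- Let F ∈ 𝔉_1 be a symmetric distribution concentrated on the set of odd integers (i.e., F assigns probability 1 to {2k+1 : k ∈ ℤ}). Then for every n ∈ ℕ, ρ(F^n, F^{n+1}) ≥ Q(F^n, 0)/2, where Q(F^n, 0) = sup_x F^n{ {x} } is the maximal point mass of F^n. -/

import Mathlib

open MeasureTheory RealInnerProductSpace
open scoped ENNReal

noncomputable section

abbrev Euc (d : ℕ) := EuclideanSpace ℝ (Fin d)

/-- Convolution of two measures on an additive structure. -/
def mconv {α : Type*} [MeasurableSpace α] [Add α] (μ ν : Measure α) : Measure α :=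
  (μ.prod ν).map (fun p => p.1 + p.2)

/-- Convolution power `μ^{*n}`, with `μ^{*0}` the Dirac measure at `0`. -/
def convPow {α : Type*} [MeasurableSpace α] [AddMonoid α] (μ : Measure α) : ℕ → Measure α
  | 0 => Measure.dirac 0
  | n + 1 => mconv (convPow μ n) μ

/-- Convolution product of a finite family of measures. -/
def convProd {α : Type*} [MeasurableSpace α] [AddMonoid α] :
    ∀ {n : ℕ}, (Fin n → Measure α) → Measure α
  | 0, _ => Measure.dirac 0
  | n + 1, G => mconv (convProd (fun i : Fin n => G i.castSucc)) (G (Fin.last n))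

/-- The compound Poisson measure `e(a·μ) = e^{-a} ∑_k a^k μ^{*k}/k!`. -/
def cpois {α : Type*} [MeasurableSpace α] [AddMonoid α] (a : ℝ) (μ : Measure α) : Measure α :=
  Measure.sum fun k : ℕ =>
    (ENNReal.ofReal (Real.exp (-a) * a ^ k / k.factorial)) • convPow μ k

/-- A measure is symmetric if it is invariant under `x ↦ -x`. -/
def IsSymmMeasure {d : ℕ} (μ : Measure (Euc d)) : Prop :=
  μ.map (fun x => -x) = μ

/-- Characteristic function of a measure on `ℝ^d`. -/
def charFn {d : ℕ} (μ : Measure (Euc d)) (t : Euc d) : ℂ :=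
  ∫ x, Complex.exp ((⟪t, x⟫ : ℂ) * Complex.I) ∂μ

/-- Characteristic function of a measure on `ℝ`. -/
def charFn1 (μ : Measure ℝ) (t : ℝ) : ℂ :=
  ∫ x, Complex.exp (((t * x : ℝ) : ℂ) * Complex.I) ∂μ

/-- Convex polyhedra determined by the directions `t 1, …, t m`. -/
def polyhedraOn {d m : ℕ} (t : Fin m → Euc d) : Set (Set (Euc d)) :=
  {X | ∃ a b : Fin m → EReal,
    X = {x | ∀ j, a j ≤ ((⟪x, t j⟫ : ℝ) : EReal) ∧ ((⟪x, t j⟫ : ℝ) : EReal) ≤ b j}}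

/-- The collection `𝔛_m` of convex polyhedra determined by `m` pairs of parallel hyperplanes. -/
def polyhedra (d m : ℕ) : Set (Set (Euc d)) :=
  {X | ∃ t : Fin m → Euc d, X ∈ polyhedraOn t}

/-- The distance `ρ_m(G,H) = sup_{X ∈ 𝔛_m} |G{X} - H{X}|`. -/
def rhoPoly {d : ℕ} (m : ℕ) (G H : Measure (Euc d)) : ℝ :=
  ⨆ X ∈ polyhedra d m, |(G X).toReal - (H X).toReal|

/-- The Lévy concentration function `Q(μ, b) = sup_x μ[x, x+b]`. -/
def concFn (μ : Measure ℝ) (b : ℝ) : ℝ :=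
  ⨆ x : ℝ, (μ (Set.Icc x (x + b))).toReal

/-- `q(H, X) = inf_{‖t‖=1} Q(𝓛(⟨ξ,t⟩), λ{⟨x,t⟩ : x ∈ X})` where `H = 𝓛(ξ)`. -/
def qFn {d : ℕ} (H : Measure (Euc d)) (X : Set (Euc d)) : ℝ :=
  ⨅ t ∈ {t : Euc d | ‖t‖ = 1},
    concFn (H.map fun x => ⟪x, t⟫) (volume ((fun x => ⟪x, t⟫) '' X)).toReal

/-- The uniform (Kolmogorov) distance on `ℝ^d`. -/
def kolmDist {d : ℕ} (G H : Measure (Euc d)) : ℝ :=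
  ⨆ x : Euc d, |(G {y | ∀ i, y i ≤ x i}).toReal - (H {y | ∀ i, y i ≤ x i}).toReal|

/-- The uniform (Kolmogorov) distance on `ℝ`. -/
def kolmDist1 (G H : Measure ℝ) : ℝ :=
  ⨆ x : ℝ, |(G (Set.Iic x)).toReal - (H (Set.Iic x)).toReal|

end

section Stmt18Aux

open MeasureTheory

/-- The lattice `n + 2ℤ` inside `ℝ`. -/
def stmtSlat (n : ℕ) : Set ℝ := {x : ℝ | ∃ k : ℤ, x = n + 2 * k}

lemma stmtSlat_countable (n : ℕ) : (stmtSlat n).Countable := by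
  have h : stmtSlat n = Set.range (fun k : ℤ => (n : ℝ) + 2 * k) := by
    ext x; simp [stmtSlat, eq_comm]
  rw [h]; exact Set.countable_range _

lemma stmtSlat_measurable (n : ℕ) : MeasurableSet (stmtSlat n) :=
  (stmtSlat_countable n).measurableSet

lemma stmt_measurable_add : Measurable (fun p : ℝ × ℝ => p.1 + p.2) :=
  measurable_fst.add measurable_snd

lemma convPow_prob (F : Measure ℝ) [IsProbabilityMeasure F] (n : ℕ) :
    IsProbabilityMeasure (convPow F n) := by
  induction n with
  | zero => exact Measure.dirac.isProbabilityMeasure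
  | succ n ih =>
    show IsProbabilityMeasure (mconv (convPow F n) F)
    haveI := ih
    exact Measure.isProbabilityMeasure_map stmt_measurable_add.aemeasurable

lemma mconv_null (μ ν : Measure ℝ) [SFinite μ] [SFinite ν]
    (A B C : Set ℝ) (hC : MeasurableSet C)
    (hμ : μ Aᶜ = 0) (hν : ν Bᶜ = 0) (h : ∀ a ∈ A, ∀ b ∈ B, a + b ∈ C) :
    mconv μ ν Cᶜ = 0 := by
  rw [mconv, Measure.map_apply stmt_measurable_add hC.compl]
  have hsub : (fun p : ℝ × ℝ => p.1 + p.2) ⁻¹' Cᶜ ⊆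
      (Aᶜ ×ˢ Set.univ) ∪ (Set.univ ×ˢ Bᶜ) := by
    intro p hp
    simp only [Set.mem_preimage, Set.mem_compl_iff] at hp
    by_cases hA : p.1 ∈ A
    · right; exact ⟨Set.mem_univ _, fun hB => hp (h _ hA _ hB)⟩
    · left; exact ⟨hA, Set.mem_univ _⟩
  refine measure_mono_null hsub ?_
  refine le_antisymm ?_ zero_le
  calc (μ.prod ν) ((Aᶜ ×ˢ Set.univ) ∪ (Set.univ ×ˢ Bᶜ))
      ≤ (μ.prod ν) (Aᶜ ×ˢ Set.univ) + (μ.prod ν) (Set.univ ×ˢ Bᶜ) :=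
        measure_union_le _ _
    _ = 0 := by rw [Measure.prod_prod, Measure.prod_prod, hμ, hν]; simp

lemma convPow_null (F : Measure ℝ) [IsProbabilityMeasure F]
    (hF1 : F (stmtSlat 1)ᶜ = 0) (n : ℕ) : convPow F n (stmtSlat n)ᶜ = 0 := by
  induction n with
  | zero =>
    show (Measure.dirac (0:ℝ)) (stmtSlat 0)ᶜ = 0
    rw [Measure.dirac_apply' _ (stmtSlat_measurable 0).compl]
    have h0 : (0:ℝ) ∈ stmtSlat 0 := ⟨0, by norm_num⟩
    simp [Set.indicator_of_notMem, h0]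
  | succ n ih =>
    haveI := convPow_prob F n
    refine mconv_null _ _ (stmtSlat n) (stmtSlat 1) (stmtSlat (n+1))
      (stmtSlat_measurable _) ih hF1 ?_
    rintro a ⟨k, rfl⟩ b ⟨m, rfl⟩
    exact ⟨k + m, by push_cast; ring⟩

end Stmt18Aux

theorem stmt18 (F : Measure ℝ) (hF : IsProbabilityMeasure F)
    (hsym : F.map (fun x => -x) = F)
    (hodd : F {x : ℝ | ∃ k : ℤ, x = 2 * k + 1} = 1) (n : ℕ) (hn : 0 < n) :
    (⨆ x : ℝ, ((convPow F n) {x}).toReal) / 2 ≤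
      kolmDist1 (convPow F n) (convPow F (n + 1)) := by
  haveI := hF
  set G := convPow F n with hGdef
  set H := convPow F (n+1) with hHdef
  haveI hGp : IsProbabilityMeasure G := convPow_prob F n
  haveI hHp : IsProbabilityMeasure H := convPow_prob F (n+1)
  have hF1 : F (stmtSlat 1)ᶜ = 0 := by
    have hset : stmtSlat 1 = {x : ℝ | ∃ k : ℤ, x = 2 * k + 1} := by
      ext x
      constructor
      · rintro ⟨k, rfl⟩; exact ⟨k, by push_cast; ring⟩
      · rintro ⟨k, rfl⟩; exact ⟨k, by push_cast; ring⟩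
    rw [hset, (prob_compl_eq_zero_iff (by
      have : {x : ℝ | ∃ k : ℤ, x = 2 * k + 1} = stmtSlat 1 := hset.symm
      rw [this]; exact stmtSlat_measurable 1)).2 hodd]
  have hGnull := convPow_null F hF1 n
  have hHnull := convPow_null F hF1 (n+1)
  set ρ := kolmDist1 G H with hρdef
  have hρ0 : 0 ≤ ρ := Real.iSup_nonneg (fun x => abs_nonneg _)
  have hbound : ∀ y : ℝ, |(G (Set.Iic y)).toReal - (H (Set.Iic y)).toReal| ≤ ρ := by
    intro y
    rw [hρdef]
    unfold kolmDist1
    refine le_ciSup (f := fun z : ℝ =>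
      |(G (Set.Iic z)).toReal - (H (Set.Iic z)).toReal|) ⟨2, ?_⟩ y
    rintro r ⟨z, rfl⟩
    have hg : (G (Set.Iic z)).toReal ≤ 1 := by
      simpa using ENNReal.toReal_mono ENNReal.one_ne_top (prob_le_one (μ := G))
    have hh : (H (Set.Iic z)).toReal ≤ 1 := by
      simpa using ENNReal.toReal_mono ENNReal.one_ne_top (prob_le_one (μ := H))
    have hg0 : 0 ≤ (G (Set.Iic z)).toReal := ENNReal.toReal_nonneg
    have hh0 : 0 ≤ (H (Set.Iic z)).toReal := ENNReal.toReal_nonneg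
    rw [abs_le]; constructor <;> linarith
  have key : ∀ x : ℝ, (G {x}).toReal ≤ 2 * ρ := by
    intro x
    by_cases hx : x ∈ stmtSlat n
    · obtain ⟨k, hxk⟩ := hx
      have hHIoc : H (Set.Ioc (x-1) x) = 0 := by
        refine measure_mono_null ?_ hHnull
        intro y hy
        obtain ⟨hy1, hy2⟩ := hy
        simp only [Set.mem_compl_iff, stmtSlat, Set.mem_setOf_eq, not_exists]
        intro m hym
        push_cast at hym
        rw [hxk] at hy1 hy2
        rw [hym] at hy1 hy2
        have h1 : (2*m : ℝ) ≤ 2*k - 1 := by push_cast at hy1 hy2 ⊢; linarith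
        have h2 : (2*k : ℝ) - 2 < 2*m := by push_cast at hy1 hy2 ⊢; linarith
        have h1' : (2*m : ℤ) ≤ 2*k - 1 := by exact_mod_cast h1
        have h2' : (2*k : ℤ) - 2 < 2*m := by exact_mod_cast h2
        omega
      have hdecomp : ∀ (μ : Measure ℝ),
          μ (Set.Iic x) = μ (Set.Iic (x-1)) + μ (Set.Ioc (x-1) x) := by
        intro μ
        rw [← measure_union (Set.Iic_disjoint_Ioc le_rfl) measurableSet_Ioc,
          Set.Iic_union_Ioc_eq_Iic (by linarith)]
      have hfin : ∀ (μ : Measure ℝ) [IsProbabilityMeasure μ] (s : Set ℝ), μ s ≠ ⊤ :=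
        fun μ _ s => measure_ne_top μ s
      have hGd : (G (Set.Iic x)).toReal
          = (G (Set.Iic (x-1))).toReal + (G (Set.Ioc (x-1) x)).toReal := by
        rw [hdecomp G, ENNReal.toReal_add (hfin G _) (hfin G _)]
      have hHd : (H (Set.Iic x)).toReal = (H (Set.Iic (x-1))).toReal := by
        rw [hdecomp H, hHIoc, add_zero]
      have hGx : (G {x}).toReal ≤ (G (Set.Ioc (x-1) x)).toReal := by
        refine ENNReal.toReal_mono (hfin G _) (measure_mono ?_)
        intro y hy
        rw [Set.mem_singleton_iff] at hy
        exact hy ▸ ⟨by linarith, le_rfl⟩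
      have hb1 := hbound x
      have hb2 := hbound (x-1)
      rw [abs_le] at hb1 hb2
      linarith [hb1.1, hb1.2, hb2.1, hb2.2]
    · have hG0 : G {x} = 0 := measure_mono_null (by simpa using hx) hGnull
      rw [hG0]
      simp
      linarith
  have hsup : (⨆ x : ℝ, (G {x}).toReal) ≤ 2 * ρ := ciSup_le key
  linarith
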